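/- Let X be a commutative monoid and K a commutative ring. The category of covariant functors from the Leech category L_X to K-modules is equivalent to the category of X-graded left modules over the X-graded monoid algebra K̃X. -/

import Mathlib

open CategoryTheory

/-- The Leech category of a commutative monoid `X`. -/
abbrev Leech (X : Type) [AddCommMonoid X] : Type := X

instance Leech.category (X : Type) [AddCommMonoid X] : Category (Leech X) where
  Hom x z := {y : X // x + y = z}
  id x := ⟨0, add_zero x⟩
  comp f g := ⟨f.1 + g.1, by rw [← add_assoc, f.2, g.2]⟩
  id_comp f := Subtype.ext (zero_add f.1)
  comp_id f := Subtype.ext (add_zero f.1)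
  assoc f g h := Subtype.ext (add_assoc f.1 g.1 h.1)

variable (K X : Type) [CommRing K] [AddCommMonoid X]

/-- An `X`-graded left module over the `X`-graded monoid algebra `K̃X`
(whose degree-`y` component is `K·1_y`): a family of `K`-modules `N x` together with
the action maps `(K̃X)_y ⊗ N x → N (x + y)`, i.e. `K`-bilinear maps `K ⊗ N x → N (x+y)`,
satisfying the unit and associativity laws. -/
structure TildeModule where
  N : X → Type
  [grp : ∀ x, AddCommGroup (N x)]
  [mod : ∀ x, Module K (N x)]
  act : ∀ y x : X, K →ₗ[K] N x →ₗ[K] N (x + y)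
  act_one : ∀ (x : X) (n : N x),
    act 0 x (1 : K) n = cast (congrArg N (add_zero x).symm) n
  act_mul : ∀ (y y' x : X) (c c' : K) (n : N x),
    act y' (x + y) c' (act y x c n)
      = cast (congrArg N (add_assoc x y y').symm) (act (y + y') x (c * c') n)

attribute [instance] TildeModule.grp TildeModule.mod

variable {K X}

/-- Morphisms of `X`-graded `K̃X`-modules: degree-preserving `K`-linear maps
commuting with the action. -/
@[ext]
structure TildeHom (M P : TildeModule K X) where
  toFun : ∀ x, M.N x →ₗ[K] P.N x
  compat : ∀ (y x : X) (c : K) (n : M.N x),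
    toFun (x + y) (M.act y x c n) = P.act y x c (toFun x n)

instance : Category (TildeModule K X) where
  Hom M P := TildeHom M P
  id M := ⟨fun x => LinearMap.id, fun y x c n => rfl⟩
  comp f g := ⟨fun x => (g.toFun x).comp (f.toFun x), by
    intro y x c n
    simp [LinearMap.comp_apply, f.compat, g.compat]⟩
  id_comp f := rfl
  comp_id f := rfl
  assoc f g h := rfl

namespace LeechEquivProof

/-- Cast along an equality of degrees, as a linear map. -/
def castL (M : TildeModule K X) {a b : X} (h : a = b) : M.N a →ₗ[K] M.N b :=
  h ▸ (LinearMap.id : M.N a →ₗ[K] M.N a)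

@[simp] theorem castL_apply (M : TildeModule K X) {a b : X} (h : a = b) (n : M.N a) :
    castL M h n = cast (congrArg M.N h) n := by subst h; rfl

theorem act_smul (M : TildeModule K X) (y x : X) (c : K) (n : M.N x) :
    M.act y x c n = c • M.act y x 1 n := by
  have : M.act y x c = c • M.act y x 1 := by rw [← map_smul, smul_eq_mul, mul_one]
  rw [this, LinearMap.smul_apply]

theorem leech_eqToHom {a b : Leech X} (h : a = b) :
    (eqToHom h : a ⟶ b) = ⟨0, by rw [add_zero, h]⟩ := by subst h; rfl

theorem map_eqToHom_apply (F : Leech X ⥤ ModuleCat.{0} K) {a b : Leech X} (h : a = b)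
    (n : F.obj a) :
    (F.map (eqToHom h)) n = cast (congrArg (fun t => (F.obj t : Type)) h) n := by
  subst h; simp

theorem cast_smul_family (N : X → Type) [∀ x, AddCommGroup (N x)] [∀ x, Module K (N x)]
    {a b : X} (h : a = b) (c : K) (n : N a) :
    cast (congrArg N h) (c • n) = c • cast (congrArg N h) n := by subst h; rfl

/-- From a graded module, a functor on the Leech category. -/
def ofTilde (M : TildeModule K X) : Leech X ⥤ ModuleCat.{0} K where
  obj x := ModuleCat.of K (M.N x)
  map {x z} f := ModuleCat.ofHom ((castL M f.2).comp (M.act f.1 x 1))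
  map_id x := by
    ext n
    show castL M (add_zero x) (M.act 0 x 1 n) = n
    rw [castL_apply, M.act_one, cast_cast, cast_eq]
  map_comp {x z w} f g := by
    obtain ⟨y, rfl⟩ := f
    obtain ⟨y', rfl⟩ := g
    refine ModuleCat.hom_ext (LinearMap.ext fun n => ?_)
    show castL M _ (M.act (y + y') x 1 n) = M.act y' (x + y) 1 (M.act y x 1 n)
    rw [M.act_mul, one_mul, castL_apply]

/-- From a functor on the Leech category, a graded module. -/
def toTilde (F : Leech X ⥤ ModuleCat.{0} K) : TildeModule K X where
  N x := F.obj x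
  act y x := LinearMap.mk₂ K (fun c n => c • (F.map (⟨y, rfl⟩ : x ⟶ x + y)) n)
    (fun c c' n => add_smul c c' _)
    (fun a c n => mul_smul a c ((F.map (⟨y, rfl⟩ : x ⟶ x + y)) n))
    (fun c n n' => by dsimp only; rw [map_add, smul_add])
    (fun a c n => by dsimp only; rw [map_smul]; exact smul_comm c a ((F.map (⟨y, rfl⟩ : x ⟶ x + y)) n))
  act_one x n := by
    show (1 : K) • (F.map (⟨0, rfl⟩ : x ⟶ x + 0)) n = _
    rw [one_smul]
    have h1 : (⟨0, rfl⟩ : x ⟶ x + 0) = eqToHom (add_zero x).symm :=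
      Subtype.ext (by rw [leech_eqToHom])
    rw [h1, map_eqToHom_apply]
  act_mul y y' x c c' n := by
    show c' • (F.map (⟨y', rfl⟩ : x + y ⟶ x + y + y'))
        (c • (F.map (⟨y, rfl⟩ : x ⟶ x + y)) n)
      = cast _ ((c * c') • (F.map (⟨y + y', rfl⟩ : x ⟶ x + (y + y'))) n)
    have hcomp : (⟨y, rfl⟩ : x ⟶ x + y) ≫ (⟨y', rfl⟩ : x + y ⟶ x + y + y')
        = (⟨y + y', rfl⟩ : x ⟶ x + (y + y')) ≫ eqToHom (add_assoc x y y').symm := by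
      apply Subtype.ext
      show y + y' = (y + y') + _
      rw [leech_eqToHom]
      exact (add_zero _).symm
    rw [map_smul, smul_comm, ← mul_smul]
    have h2 := congrArg (fun (φ : (x : Leech X) ⟶ x + y + y') => (F.map φ) n) hcomp
    simp only [Functor.map_comp, ConcreteCategory.comp_apply, Function.comp_apply] at h2
    rw [h2, map_eqToHom_apply, cast_smul_family (fun t => (F.obj t : Type))]
    exact (add_assoc x y y').symm

/-- The functor from graded modules to functors. -/
def backF : TildeModule K X ⥤ (Leech X ⥤ ModuleCat.{0} K) where
  obj := ofTilde
  map {M P} f :=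
    { app := fun x => ModuleCat.ofHom (f.toFun x)
      naturality := by
        rintro x z ⟨y, rfl⟩
        ext n
        show f.toFun (x + y) (castL M rfl (M.act y x 1 n))
          = castL P rfl (P.act y x 1 (f.toFun x n))
        simpa using f.compat y x 1 n }
  map_id M := rfl
  map_comp f g := rfl

/-- The functor from functors to graded modules. -/
def funcF : (Leech X ⥤ ModuleCat.{0} K) ⥤ TildeModule K X where
  obj := toTilde
  map {F G} η :=
    { toFun := fun x => (η.app x).hom
      compat := by
        intro y x c n
        show (η.app (x + y)) (c • (F.map (⟨y, rfl⟩ : x ⟶ x + y)) n)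
          = c • (G.map (⟨y, rfl⟩ : x ⟶ x + y)) ((η.app x) n)
        rw [map_smul]
        congr 1
        exact LinearMap.congr_fun (congrArg ModuleCat.Hom.hom (η.naturality (⟨y, rfl⟩ : x ⟶ x + y))) n }
  map_id F := rfl
  map_comp f g := rfl

end LeechEquivProof

open LeechEquivProof in
/-- The category of covariant functors from the Leech category `L_X` to `K`-modules is
equivalent to the category of `X`-graded left modules over the `X`-graded monoid
algebra `K̃X`. -/
theorem leechFunctors_equiv_tildeModules (K X : Type) [CommRing K] [AddCommMonoid X] :
    Nonempty ((Leech X ⥤ ModuleCat.{0} K) ≌ TildeModule K X) := by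
  refine ⟨CategoryTheory.Equivalence.mk funcF backF ?_ ?_⟩
  · -- unit
    refine NatIso.ofComponents (fun F => ?_) ?_
    · refine NatIso.ofComponents (fun x => ?_) ?_
      · exact
          { hom := ModuleCat.ofHom (LinearMap.id : F.obj x →ₗ[K] F.obj x)
            inv := ModuleCat.ofHom (LinearMap.id : F.obj x →ₗ[K] F.obj x)
            hom_inv_id := rfl
            inv_hom_id := rfl }
      · rintro x z ⟨y, rfl⟩
        refine ModuleCat.hom_ext (LinearMap.ext fun n => ?_)
        show (F.map (⟨y, rfl⟩ : x ⟶ x + y)) n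
          = (1 : K) • (F.map (⟨y, rfl⟩ : x ⟶ x + y)) n
        rw [one_smul]
    · intro F G η
      ext x n
      rfl
  · -- counit
    refine NatIso.ofComponents (fun M => ?_) ?_
    · refine
        { hom := { toFun := fun x => (LinearMap.id : M.N x →ₗ[K] M.N x), compat := ?_ }
          inv := { toFun := fun x => (LinearMap.id : M.N x →ₗ[K] M.N x), compat := ?_ }
          hom_inv_id := rfl
          inv_hom_id := rfl } <;>
      · intro y x c n
        first
        | exact (act_smul M y x c n).symm
        | exact act_smul M y x c n
    · intro M P f
      rfl
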